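/- (Descent property of the MM iteration for the Frobenius cost.) Let k ≥ 1, P ∈ ℂ^{k×p}, w ∈ ℂ^p, and let Q ∈ ℂ^{k×k} be Hermitian positive semidefinite. Define the cost f(w̄) = −4·Re(w̄ᴴ P w) − 2·Re(w̄ᴴ Q w̄) for w̄ ∈ ℂ^k. Let w̄⁰ ∈ 𝕋_k and set u = P w + Q w̄⁰. If every entry of u is nonzero, then the MM update w̄⁺ := Φ_𝕋(u) lies in 𝕋_k and satisfies f(w̄⁺) ≤ f(w̄⁰). -/

import Mathlib

open Matrix
open scoped ComplexOrder

/-- Descent property of the MM iteration for the Frobenius cost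
`f(w̄) = −4·Re(w̄ᴴ P w) − 2·Re(w̄ᴴ Q w̄)` with `Q` Hermitian positive semidefinite:
with `u = P w + Q w̄⁰` having all entries nonzero, the MM update `w̄⁺ = Φ_𝕋(u)`
lies on the torus and satisfies `f(w̄⁺) ≤ f(w̄⁰)`. -/
theorem mm_descent_frobenius {p k : ℕ} (hk : 1 ≤ k)
    (P : Matrix (Fin k) (Fin p) ℂ) (w : Fin p → ℂ)
    (Q : Matrix (Fin k) (Fin k) ℂ) (hQ : Q.PosSemidef)
    (f : (Fin k → ℂ) → ℝ)
    (hf : ∀ wb, f wb =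
      -(4 * (star wb ⬝ᵥ P *ᵥ w).re) - 2 * (star wb ⬝ᵥ Q *ᵥ wb).re)
    (wb0 : Fin k → ℂ) (hwb0 : ∀ i, ‖wb0 i‖ = 1)
    (u : Fin k → ℂ) (hu : u = P *ᵥ w + Q *ᵥ wb0)
    (hu0 : ∀ i, u i ≠ 0)
    (wbplus : Fin k → ℂ)
    (hwbplus : ∀ i, wbplus i = u i / ((‖u i‖ : ℝ) : ℂ)) :
    (∀ i, ‖wbplus i‖ = 1) ∧ f wbplus ≤ f wb0 := by
  have habs : ∀ i, ‖wbplus i‖ = 1 := by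
    intro i
    rw [hwbplus i, norm_div, Complex.norm_real, Real.norm_eq_abs, abs_of_nonneg (norm_nonneg _)]
    exact div_self (norm_ne_zero_iff.mpr (hu0 i))
  refine ⟨habs, ?_⟩
  -- symmetry of real part
  have hsym : ∀ a b : Fin k → ℂ, (star a ⬝ᵥ Q *ᵥ b).re = (star b ⬝ᵥ Q *ᵥ a).re := by
    intro a b
    have h1 : star (star a ⬝ᵥ Q *ᵥ b) = star b ⬝ᵥ Q *ᵥ a := by
      rw [star_dotProduct, star_star, star_mulVec, hQ.1.eq, ← dotProduct_mulVec]
    have := congrArg Complex.re h1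
    simpa [Complex.conj_re] using this
  -- PSD expansion
  have hpsd := hQ.dotProduct_mulVec_nonneg (wbplus - wb0)
  have hpsd' : 0 ≤ (star (wbplus - wb0) ⬝ᵥ Q *ᵥ (wbplus - wb0)).re := by
    rw [Complex.le_def] at hpsd
    simpa using hpsd.1
  have hexp : (star (wbplus - wb0) ⬝ᵥ Q *ᵥ (wbplus - wb0)).re
      = (star wbplus ⬝ᵥ Q *ᵥ wbplus).re - (star wbplus ⬝ᵥ Q *ᵥ wb0).re
        - (star wb0 ⬝ᵥ Q *ᵥ wbplus).re + (star wb0 ⬝ᵥ Q *ᵥ wb0).re := by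
    rw [star_sub, Matrix.mulVec_sub, sub_dotProduct, dotProduct_sub, dotProduct_sub]
    simp [Complex.sub_re]
    ring
  -- maximization: Re(wbplus ᴴ u) = ∑ |u i| ≥ Re(wb0 ᴴ u)
  have hmax : (star wb0 ⬝ᵥ u).re ≤ (star wbplus ⬝ᵥ u).re := by
    have h2 : (star wbplus ⬝ᵥ u).re = ∑ i, ‖u i‖ := by
      rw [dotProduct, Complex.re_sum]
      refine Finset.sum_congr rfl fun i _ => ?_
      have : star (wbplus i) * u i = ((‖u i‖ : ℝ) : ℂ) := by
        rw [hwbplus i]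
        rw [star_div₀, Complex.star_def, Complex.conj_ofReal]
        rw [div_mul_eq_mul_div, Complex.conj_mul']
        push_cast
        rw [pow_two, mul_div_assoc, div_self (by exact_mod_cast norm_ne_zero_iff.mpr (hu0 i)), mul_one]
      rw [show (star wbplus) i = star (wbplus i) from rfl, this, Complex.ofReal_re]
    have h3 : (star wb0 ⬝ᵥ u).re ≤ ∑ i, ‖u i‖ := by
      rw [dotProduct, Complex.re_sum]
      refine Finset.sum_le_sum fun i _ => ?_
      calc (star wb0 i * u i).re ≤ ‖star wb0 i * u i‖ := Complex.re_le_norm _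
        _ = ‖u i‖ := by
          simp [Complex.star_def, norm_mul, Complex.norm_conj, hwb0 i]
    linarith [h2 ▸ h3]
  -- decompose u
  have hdec : ∀ a : Fin k → ℂ, (star a ⬝ᵥ u).re
      = (star a ⬝ᵥ P *ᵥ w).re + (star a ⬝ᵥ Q *ᵥ wb0).re := by
    intro a
    rw [hu, dotProduct_add, Complex.add_re]
  rw [hf, hf]
  have e1 := hdec wbplus
  have e2 := hdec wb0
  have hs := hsym wbplus wb0
  rw [e1, e2] at hmax
  linarith
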